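/- Let (ν_x)_{x>0} be a weak*-measurable family of probability measures on ℝ with ∫₀^∞ φ(x)N(x)⟨ν_x, |α|⟩ dx < ∞, let m̄ be a finite nonnegative Radon measure on (0,∞), and let H be a strictly convex, differentiable, even admissible integrand. Suppose that both of the following nonnegative quantities are finite and their sum vanishes: D_∞ := ∫₀^∞∫₀^∞ φ(x)N(y)B(y)k(x,y) ⟨ν_y(ξ)⊗ν_x(α), H(ξ) − H(α) − H'(α)(ξ−α)⟩ dx dy + ∫₀^∞∫₀^∞ φ(x)N(y)B(y)k(x,y) ⟨ν_x(α), H^∞(1) − H'(α)⟩ dm̄(y) dx = 0. Then m̄ = 0 and there exists a constant c ∈ ℝ such that ν_x = δ_c for Lebesgue-almost every x > 0. -/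

import Mathlib

open MeasureTheory Filter Set
open scoped ENNReal NNReal

namespace VDID


lemma dirac_inj {a b : ℝ} (h : (Measure.dirac a : Measure ℝ) = Measure.dirac b) : a = b := by
  by_contra hne
  have h1 : (Measure.dirac a : Measure ℝ) {b} = 1 := by
    rw [h, Measure.dirac_apply' _ (measurableSet_singleton b)]
    simp
  rw [Measure.dirac_apply' _ (measurableSet_singleton b),
    indicator_of_notMem (by simpa using hne)] at h1
  simp at h1

lemma eq_dirac_of_singleton (μ : Measure ℝ) [IsProbabilityMeasure μ] {a : ℝ}
    (h : μ {a} = 1) : μ = Measure.dirac a := by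
  have hcompl : μ {a}ᶜ = 0 := by
    rw [prob_compl_eq_zero_iff (measurableSet_singleton a)]; exact h
  ext s hs
  rw [Measure.dirac_apply' _ hs]
  by_cases ha : a ∈ s
  · rw [indicator_of_mem ha]
    have hsc : μ sᶜ = 0 :=
      measure_mono_null (fun ξ hξ (hh : ξ ∈ ({a} : Set ℝ)) => hξ (by simpa using hh ▸ ha)) hcompl
    have := (prob_compl_eq_zero_iff hs).mp hsc
    simpa using this
  · rw [indicator_of_notMem ha]
    exact measure_mono_null (fun ξ hξ (hh : ξ ∈ ({a} : Set ℝ)) => ha (by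
      rw [mem_singleton_iff] at hh; rwa [hh] at hξ)) hcompl

lemma measurable_of_weak (ν : ℝ → Measure ℝ) (hprob : ∀ x, IsProbabilityMeasure (ν x))
    (hmeas : ∀ g : ℝ → ℝ, Continuous g → (∃ Cg, ∀ x, |g x| ≤ Cg) →
      Measurable fun x => ∫ ξ, g ξ ∂(ν x)) : Measurable ν := by
  apply Measure.measurable_of_measurable_coe
  intro s hs
  refine MeasurableSpace.induction_on_inter
    (C := fun t _ => Measurable fun x => ν x t)
    (s := {t : Set ℝ | IsClosed t})
    ((BorelSpace.measurable_eq).trans borel_eq_generateFrom_isClosed)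
    isPiSystem_isClosed ?hempty ?hbasic ?hcompl ?hunion s hs
  case hempty => simpa using measurable_const
  case hcompl =>
    intro t ht hC
    have key : ∀ x, ν x tᶜ = 1 - ν x t := by
      intro x
      haveI := hprob x
      rw [measure_compl ht (measure_ne_top _ _), measure_univ]
    simp_rw [key]
    exact measurable_const.sub hC
  case hunion =>
    intro f hdisj hfm hC
    simp_rw [measure_iUnion hdisj hfm]
    exact Measurable.ennreal_tsum hC
  case hbasic =>
    intro t ht
    replace ht : IsClosed t := ht
    rcases eq_empty_or_nonempty t with rfl | hne
    · simpa using measurable_const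
    set f : ℕ → ℝ → ℝ := fun n ξ => max 0 (1 - n * Metric.infDist ξ t) with hf
    have hfc : ∀ n, Continuous (f n) := fun n =>
      continuous_const.max (continuous_const.sub
        (continuous_const.mul (Metric.continuous_infDist_pt t)))
    have hd0 : ∀ ξ, 0 ≤ Metric.infDist ξ t := fun ξ => Metric.infDist_nonneg
    have hfb : ∀ n ξ, |f n ξ| ≤ 1 := by
      intro n ξ
      rw [abs_le]
      constructor
      · have := le_max_left (0:ℝ) (1 - n * Metric.infDist ξ t); linarith
      · refine max_le (by norm_num) ?_
        have : (0:ℝ) ≤ (n:ℝ) * Metric.infDist ξ t :=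
          mul_nonneg (Nat.cast_nonneg n) (hd0 ξ)
        linarith
    have hkey : ∀ x, ν x t = ⨅ n, ENNReal.ofReal (∫ ξ, f n ξ ∂(ν x)) := by
      intro x
      haveI := hprob x
      have hint : ∀ n, Integrable (f n) (ν x) := fun n =>
        (integrable_const (1:ℝ)).mono' ((hfc n).aestronglyMeasurable)
          (ae_of_all _ fun ξ => by simpa using hfb n ξ)
      have h1 : ∀ n, ENNReal.ofReal (∫ ξ, f n ξ ∂(ν x))
          = ∫⁻ ξ, ENNReal.ofReal (f n ξ) ∂(ν x) := fun n =>
        ofReal_integral_eq_lintegral_ofReal (hint n) (ae_of_all _ fun ξ => le_max_left _ _)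
      simp_rw [h1]
      rw [← lintegral_iInf]
      · have hpt : ∀ ξ, (⨅ n, ENNReal.ofReal (f n ξ)) = t.indicator (1 : ℝ → ℝ≥0∞) ξ := by
          intro ξ
          by_cases hξ : ξ ∈ t
          · have hd : Metric.infDist ξ t = 0 := Metric.infDist_zero_of_mem hξ
            simp [indicator_of_mem hξ, hf, hd]
          · have hd : 0 < Metric.infDist ξ t := (ht.notMem_iff_infDist_pos hne).mp hξ
            rw [indicator_of_notMem hξ]
            refine le_antisymm ?_ (zero_le)
            obtain ⟨n, hn⟩ := exists_nat_gt (1 / Metric.infDist ξ t)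
            refine iInf_le_of_le n ?_
            have hfn : f n ξ = 0 := by
              apply max_eq_left
              rw [div_lt_iff₀ hd] at hn
              nlinarith
            simp [hfn]
        rw [lintegral_congr hpt, lintegral_indicator_one ht.measurableSet]
      · exact fun n => ENNReal.measurable_ofReal.comp (hfc n).measurable
      · intro n m hnm ξ
        apply ENNReal.ofReal_le_ofReal
        apply max_le_max le_rfl
        have : (n:ℝ) * Metric.infDist ξ t ≤ (m:ℝ) * Metric.infDist ξ t :=
          mul_le_mul_of_nonneg_right (Nat.cast_le.mpr hnm) (hd0 ξ)
        linarith
      · have hb : (∫⁻ a, ENNReal.ofReal (f 0 a) ∂(ν x)) ≤ 1 := by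
          calc (∫⁻ a, ENNReal.ofReal (f 0 a) ∂(ν x)) ≤ ∫⁻ _, 1 ∂(ν x) :=
                lintegral_mono fun ξ => by
                  calc ENNReal.ofReal (f 0 ξ) ≤ ENNReal.ofReal 1 :=
                        ENNReal.ofReal_le_ofReal ((abs_le.mp (hfb 0 ξ)).2)
                    _ = 1 := by simp
            _ = 1 := by simp [measure_univ]
        exact ne_top_of_le_ne_top ENNReal.one_ne_top hb
    simp_rw [hkey]
    exact Measurable.iInf fun n =>
      ENNReal.measurable_ofReal.comp (hmeas (f n) (hfc n) ⟨1, fun ξ => hfb n ξ⟩)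

lemma meas_kernel_lint {α : Type*} [MeasurableSpace α] {f : α → ℝ → ℝ≥0∞}
    (hf : Measurable (Function.uncurry f)) {m : α → Measure ℝ} (hm : Measurable m)
    (hp : ∀ a, IsProbabilityMeasure (m a)) :
    Measurable fun a => ∫⁻ b, f a b ∂(m a) := by
  let κ : ProbabilityTheory.Kernel α ℝ := ⟨m, hm⟩
  haveI : ProbabilityTheory.IsMarkovKernel κ := ⟨hp⟩
  exact Measurable.lintegral_kernel_prod_right (κ := κ) hf



lemma slope_tendsto (H : ℝ → ℝ) (Hinf : ℝ)
    (hHinf : Tendsto (fun s => H s / s) atTop (nhds Hinf)) (a : ℝ) :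
    Tendsto (fun t => (H t - H a) / (t - a)) atTop (nhds Hinf) := by
  have h1 : Tendsto (fun t : ℝ => t - a) atTop atTop :=
    tendsto_atTop_add_const_right _ (-a) tendsto_id
  have h2 : Tendsto (fun t : ℝ => (t - a)⁻¹) atTop (nhds 0) := h1.inv_tendsto_atTop
  have h3 : Tendsto (fun t : ℝ => 1 + a * (t - a)⁻¹) atTop (nhds (1 + a * 0)) :=
    tendsto_const_nhds.add (tendsto_const_nhds.mul h2)
  have h4 : Tendsto (fun t => H t / t * (1 + a * (t - a)⁻¹) - H a * (t - a)⁻¹) atTop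
      (nhds (Hinf * (1 + a * 0) - H a * 0)) :=
    (hHinf.mul h3).sub (tendsto_const_nhds.mul h2)
  have h5 : (Hinf * (1 + a * 0) - H a * 0) = Hinf := by ring
  rw [h5] at h4
  refine h4.congr' ?_
  filter_upwards [eventually_gt_atTop (max a 0)] with t ht
  have hta : t - a ≠ 0 := by
    have := lt_of_le_of_lt (le_max_left a 0) ht; linarith
  have ht0 : t ≠ 0 := by
    have := lt_of_le_of_lt (le_max_right a 0) ht; linarith
  field_simp
  ring

lemma deriv_lt_recession {H : ℝ → ℝ} (hHdiff : Differentiable ℝ H)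
    (hHconv : StrictConvexOn ℝ Set.univ H) {Hinf : ℝ}
    (hHinf : Tendsto (fun s => H s / s) atTop (nhds Hinf)) (a : ℝ) :
    deriv H a < Hinf := by
  have hstrict : StrictMono (deriv H) :=
    strictMonoOn_univ.mp (hHconv.strictMonoOn_deriv (fun x _ => hHdiff x))
  have hle : deriv H (a + 1) ≤ Hinf := by
    refine ge_of_tendsto (slope_tendsto H Hinf hHinf (a + 1)) ?_
    filter_upwards [eventually_gt_atTop (a + 1)] with t ht
    have := (hHconv.convexOn).deriv_le_slope (mem_univ (a + 1)) (mem_univ t) ht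
      (hHdiff (a + 1))
    rwa [slope_def_field] at this
  exact lt_of_lt_of_le (hstrict (lt_add_one a)) hle

lemma breg_pos {H : ℝ → ℝ} (hHdiff : Differentiable ℝ H)
    (hHconv : StrictConvexOn ℝ Set.univ H) {α ξ : ℝ} (hne : ξ ≠ α) :
    0 < H ξ - H α - deriv H α * (ξ - α) := by
  rcases lt_or_gt_of_ne hne with hlt | hgt
  · have h := hHconv.slope_lt_deriv (mem_univ ξ) (mem_univ α) hlt (hHdiff α)
    rw [slope_def_field] at h
    have h2 : H α - H ξ < deriv H α * (α - ξ) := (div_lt_iff₀ (by linarith)).mp h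
    nlinarith
  · have h := hHconv.deriv_lt_slope (mem_univ α) (mem_univ ξ) hgt (hHdiff α)
    rw [slope_def_field] at h
    have h2 : deriv H α * (ξ - α) < H ξ - H α := (lt_div_iff₀ (by linarith)).mp h
    linarith


end VDID



/-- vanishing dissipation forces a constant Dirac profile: let
`(ν_x)_{x>0}` be a weak*-measurable family of probability measures on `ℝ` with
`∫₀^∞ φ(x)N(x)⟨ν_x,|α|⟩dx < ∞`, `m̄` a finite nonnegative measure on `(0,∞)`, and
`H` a strictly convex, differentiable, even admissible integrand with recession
constant `H^∞(1) = Hinf`. If the two nonnegative parts of the limiting entropy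
dissipation are finite and their sum vanishes, then `m̄ = 0` and `ν_x = δ_c` for
a.e. `x > 0`, for some constant `c`. -/
theorem vanishing_dissipation_implies_dirac
    (B N phi : ℝ → ℝ) (k : ℝ → ℝ → ℝ)
    (hB_bdd : ∃ C, ∀ x, 0 ≤ x → |B x| ≤ C)
    (hB_lip : ∃ C : NNReal, LipschitzOnWith C B (Ici 0))
    (hB_pos : ∀ x, 0 ≤ x → 0 < B x)
    (hk_cont : Continuous (Function.uncurry k))
    (hk_bdd : ∃ C, ∀ x y, 0 ≤ x → 0 ≤ y → |k x y| ≤ C)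
    (hk_zero : ∀ x y, 0 ≤ y → y < x → k x y = 0)
    (hk_pos : ∀ x y, 0 ≤ x → x < y → 0 < k x y)
    (hN_cont : ContinuousOn N (Ioi 0)) (hN_pos : ∀ x, 0 < x → 0 < N x)
    (hphi_cont : ContinuousOn phi (Ioi 0)) (hphi_pos : ∀ x, 0 < x → 0 < phi x)
    (ν : ℝ → Measure ℝ) (hprob : ∀ x, IsProbabilityMeasure (ν x))
    (hmeas : ∀ g : ℝ → ℝ, Continuous g → (∃ Cg, ∀ x, |g x| ≤ Cg) →
      Measurable fun x => ∫ ξ, g ξ ∂(ν x))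
    (hfirstmoment :
      (∫⁻ x in Ioi (0:ℝ),
        ENNReal.ofReal (phi x * N x) * ∫⁻ α, ENNReal.ofReal |α| ∂(ν x)) < ⊤)
    (mbar : Measure ℝ) [IsFiniteMeasure mbar] (hmbar_supp : mbar (Iic 0) = 0)
    (H : ℝ → ℝ) (hHdiff : Differentiable ℝ H)
    (hHconv : StrictConvexOn ℝ Set.univ H)
    (hHnonneg : ∀ x, 0 ≤ H x) (hHeven : ∀ x, H (-x) = H x)
    (hHgrowth : ∃ C, ∀ x, |H x| ≤ C * (1 + |x|))
    (Hinf : ℝ) (hHinf : Tendsto (fun s => H s / s) atTop (nhds Hinf))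
    (hD1fin :
      (∫⁻ y in Ioi (0:ℝ), ∫⁻ x in Ioi (0:ℝ),
          ENNReal.ofReal (phi x * N y * B y * k x y) *
            ∫⁻ α, (∫⁻ ξ, ENNReal.ofReal (H ξ - H α - deriv H α * (ξ - α)) ∂(ν y)) ∂(ν x)) < ⊤)
    (hD2fin :
      (∫⁻ y, (∫⁻ x in Ioi (0:ℝ),
          ENNReal.ofReal (phi x * N y * B y * k x y) *
            ∫⁻ α, ENNReal.ofReal (Hinf - deriv H α) ∂(ν x)) ∂mbar) < ⊤)
    (hDzero :
      (∫⁻ y in Ioi (0:ℝ), ∫⁻ x in Ioi (0:ℝ),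
          ENNReal.ofReal (phi x * N y * B y * k x y) *
            ∫⁻ α, (∫⁻ ξ, ENNReal.ofReal (H ξ - H α - deriv H α * (ξ - α)) ∂(ν y)) ∂(ν x))
        + (∫⁻ y, (∫⁻ x in Ioi (0:ℝ),
            ENNReal.ofReal (phi x * N y * B y * k x y) *
              ∫⁻ α, ENNReal.ofReal (Hinf - deriv H α) ∂(ν x)) ∂mbar)
        = 0) :
    mbar = 0 ∧ ∃ c : ℝ, ∀ᵐ x ∂(volume.restrict (Ioi (0:ℝ))), ν x = Measure.dirac c := by
    classical
  obtain ⟨hD1, hD2⟩ := add_eq_zero.mp hDzero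
  obtain ⟨L, hL⟩ := hB_lip
  have hν : Measurable ν := VDID.measurable_of_weak ν hprob hmeas
  have hHder_meas : Measurable (deriv H) := measurable_deriv H
  have hHcont : Continuous H := hHdiff.continuous
  have hHlt : ∀ a, deriv H a < Hinf := VDID.deriv_lt_recession hHdiff hHconv hHinf
  -- measurable versions of the coefficients
  set phiM : ℝ → ℝ := (Ioi (0:ℝ)).piecewise phi (fun _ => 0) with hphiM_def
  have hphiM : Measurable phiM :=
    ContinuousOn.measurable_piecewise hphi_cont continuousOn_const measurableSet_Ioi
  have hphiM_eq : ∀ x ∈ Ioi (0:ℝ), phiM x = phi x := fun x hx =>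
    Set.piecewise_eq_of_mem _ _ _ hx
  set NM : ℝ → ℝ := (Ioi (0:ℝ)).piecewise N (fun _ => 0) with hNM_def
  have hNM : Measurable NM :=
    ContinuousOn.measurable_piecewise hN_cont continuousOn_const measurableSet_Ioi
  have hNM_eq : ∀ y ∈ Ioi (0:ℝ), NM y = N y := fun y hy =>
    Set.piecewise_eq_of_mem _ _ _ hy
  have hBc : ContinuousOn B (Ioi (0:ℝ)) :=
    hL.continuousOn.mono (Ioi_subset_Ici le_rfl)
  set BM : ℝ → ℝ := (Ioi (0:ℝ)).piecewise B (fun _ => 0) with hBM_def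
  have hBM : Measurable BM :=
    ContinuousOn.measurable_piecewise hBc continuousOn_const measurableSet_Ioi
  have hBM_eq : ∀ y ∈ Ioi (0:ℝ), BM y = B y := fun y hy =>
    Set.piecewise_eq_of_mem _ _ _ hy
  set cM : ℝ × ℝ → ℝ≥0∞ :=
    fun q => ENNReal.ofReal (phiM q.1 * NM q.2 * BM q.2 * k q.1 q.2) with hcM_def
  have hcM : Measurable cM := ENNReal.measurable_ofReal.comp
    ((((hphiM.comp measurable_fst).mul (hNM.comp measurable_snd)).mul
      (hBM.comp measurable_snd)).mul
      (show Measurable fun q : ℝ × ℝ => k q.1 q.2 from hk_cont.measurable))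
  have hcM_eq : ∀ x ∈ Ioi (0:ℝ), ∀ y ∈ Ioi (0:ℝ),
      cM (x, y) = ENNReal.ofReal (phi x * N y * B y * k x y) := by
    intro x hx y hy
    rw [hcM_def]
    dsimp only
    rw [hphiM_eq x hx, hNM_eq y hy, hBM_eq y hy]
  have hcM_pos : ∀ x y : ℝ, 0 < x → x < y → cM (x, y) ≠ 0 := by
    intro x y hx hxy
    have hy : (0:ℝ) < y := hx.trans hxy
    rw [hcM_eq x (mem_Ioi.mpr hx) y (mem_Ioi.mpr hy)]
    have hpos : 0 < phi x * N y * B y * k x y :=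
      mul_pos (mul_pos (mul_pos (hphi_pos x hx) (hN_pos y hy)) (hB_pos y hy.le))
        (hk_pos x y hx.le hxy)
    exact (ENNReal.ofReal_pos.mpr hpos).ne'
  -- the inner integrals, as measurable functions
  set gE : ℝ → ℝ≥0∞ := fun x => ∫⁻ α, ENNReal.ofReal (Hinf - deriv H α) ∂(ν x) with hgE_def
  have hgE : Measurable gE := VDID.meas_kernel_lint
    (f := fun (_ : ℝ) α => ENNReal.ofReal (Hinf - deriv H α))
    (ENNReal.measurable_ofReal.comp (measurable_const.sub (hHder_meas.comp measurable_snd)))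
    hν hprob
  have hgE_pos : ∀ x, gE x ≠ 0 := by
    intro x
    haveI := hprob x
    have hm : Measurable fun α => ENNReal.ofReal (Hinf - deriv H α) :=
      ENNReal.measurable_ofReal.comp (measurable_const.sub hHder_meas)
    have hsupp : Function.support (fun α => ENNReal.ofReal (Hinf - deriv H α)) = univ :=
      eq_univ_of_forall fun α => by
        simp only [Function.mem_support, ne_eq, ENNReal.ofReal_eq_zero, not_le]
        linarith [hHlt α]
    have hpos : 0 < ∫⁻ α, ENNReal.ofReal (Hinf - deriv H α) ∂(ν x) := by
      rw [lintegral_pos_iff_support hm, hsupp, measure_univ]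
      exact zero_lt_one
    exact hpos.ne'
  set PsiE : ℝ × ℝ → ℝ≥0∞ :=
    fun p => ∫⁻ ξ, ENNReal.ofReal (H ξ - H p.1 - deriv H p.1 * (ξ - p.1)) ∂(ν p.2)
    with hPsiE_def
  have hPsiE : Measurable PsiE := VDID.meas_kernel_lint
    (f := fun (p : ℝ × ℝ) ξ => ENNReal.ofReal (H ξ - H p.1 - deriv H p.1 * (ξ - p.1)))
    (ENNReal.measurable_ofReal.comp
      (((hHcont.measurable.comp measurable_snd).sub
        (hHcont.measurable.comp measurable_fst.fst)).sub
        ((hHder_meas.comp measurable_fst.fst).mul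
          (measurable_snd.sub measurable_fst.fst))))
    (hν.comp measurable_snd) (fun p => hprob p.2)
  set hEfun : ℝ × ℝ → ℝ≥0∞ := fun p => ∫⁻ α, PsiE (α, p.2) ∂(ν p.1) with hhE_def
  have hhE : Measurable hEfun := VDID.meas_kernel_lint
    (f := fun (p : ℝ × ℝ) α => PsiE (α, p.2))
    (hPsiE.comp (measurable_snd.prodMk measurable_fst.snd))
    (hν.comp measurable_fst) (fun p => hprob p.1)
  -- PART 1 : mbar = 0
  have hmbar_ae : ∀ᵐ y ∂mbar, y ∈ Ioi (0:ℝ) := by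
    rw [ae_iff]
    have hset : {y : ℝ | ¬ y ∈ Ioi (0:ℝ)} = Iic 0 := by ext y; simp [not_lt]
    rw [hset]; exact hmbar_supp
  have hF2 : Measurable fun y => ∫⁻ x in Ioi (0:ℝ), cM (x, y) * gE x :=
    Measurable.lintegral_prod_right' (ν := volume.restrict (Ioi (0:ℝ)))
      (f := fun q : ℝ × ℝ => cM (q.2, q.1) * gE q.2)
      ((hcM.comp (measurable_snd.prodMk measurable_fst)).mul (hgE.comp measurable_snd))
  have hD2' : (∫⁻ y, (∫⁻ x in Ioi (0:ℝ), cM (x, y) * gE x) ∂mbar) = 0 := by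
    rw [← hD2]
    refine lintegral_congr_ae ?_
    filter_upwards [hmbar_ae] with y hy
    refine setLIntegral_congr_fun measurableSet_Ioi (fun x hx => ?_)
    rw [hcM_eq x hx y hy]
  have hF2zero := (lintegral_eq_zero_iff hF2).mp hD2'
  have hF2pos : ∀ y ∈ Ioi (0:ℝ), 0 < ∫⁻ x in Ioi (0:ℝ), cM (x, y) * gE x := by
    intro y hy
    have hm : Measurable fun x => cM (x, y) * gE x :=
      (hcM.comp (measurable_id.prodMk measurable_const)).mul hgE
    rw [lintegral_pos_iff_support hm]
    have hsub : Ioo (0:ℝ) y ⊆ Function.support fun x => cM (x, y) * gE x := by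
      intro x hx
      exact mul_ne_zero (hcM_pos x y hx.1 hx.2) (hgE_pos x)
    calc (0:ℝ≥0∞) < volume.restrict (Ioi (0:ℝ)) (Ioo 0 y) := by
          rw [Measure.restrict_apply' measurableSet_Ioi,
            inter_eq_left.mpr Ioo_subset_Ioi_self, Real.volume_Ioo, sub_zero]
          exact ENNReal.ofReal_pos.mpr (mem_Ioi.mp hy)
      _ ≤ _ := measure_mono hsub
  have hmbar0 : mbar = 0 := by
    have hfalse : ∀ᵐ _y ∂mbar, False := by
      filter_upwards [hmbar_ae, hF2zero] with y hy h0
      simp only [Pi.zero_apply] at h0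
      exact absurd h0 (hF2pos y hy).ne'
    exact ae_eq_bot.mp (eventually_false_iff_eq_bot.mp hfalse)
  -- PART 2 : Dirac profile
  have hG : Measurable fun y => ∫⁻ x in Ioi (0:ℝ), cM (x, y) * hEfun (x, y) :=
    Measurable.lintegral_prod_right' (ν := volume.restrict (Ioi (0:ℝ)))
      (f := fun q : ℝ × ℝ => cM (q.2, q.1) * hEfun (q.2, q.1))
      ((hcM.comp (measurable_snd.prodMk measurable_fst)).mul
        (hhE.comp (measurable_snd.prodMk measurable_fst)))
  have hGzero : (∫⁻ y in Ioi (0:ℝ), ∫⁻ x in Ioi (0:ℝ), cM (x, y) * hEfun (x, y)) = 0 := by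
    rw [← hD1]
    refine setLIntegral_congr_fun measurableSet_Ioi (fun y hy => ?_)
    refine setLIntegral_congr_fun measurableSet_Ioi (fun x hx => ?_)
    rw [hcM_eq x hx y hy]
  have hstep : ∀ y ∈ Ioi (0:ℝ), (∫⁻ x in Ioi (0:ℝ), cM (x, y) * hEfun (x, y)) = 0 →
      ∃ t, ν y = Measure.dirac t ∧
        ∀ᵐ x ∂(volume.restrict (Ioi (0:ℝ))), x < y → ν x = Measure.dirac t := by
    intro y hy hGy
    have hmx : Measurable fun x => cM (x, y) * hEfun (x, y) :=
      (hcM.comp (measurable_id.prodMk measurable_const)).mul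
        (hhE.comp (measurable_id.prodMk measurable_const))
    have hax : ∀ᵐ x ∂(volume.restrict (Ioi (0:ℝ))), cM (x, y) * hEfun (x, y) = 0 := by
      have h1 := (lintegral_eq_zero_iff hmx).mp hGy
      filter_upwards [h1] with x hx
      simpa using hx
    have hkey : ∀ x, 0 < x → x < y → cM (x, y) * hEfun (x, y) = 0 →
        ∃ t, ν y = Measure.dirac t ∧ ν x = Measure.dirac t := by
      intro x hx hxy hA0
      have hhE0 : hEfun (x, y) = 0 := by
        rcases mul_eq_zero.mp hA0 with h | h
        · exact absurd h (hcM_pos x y hx hxy)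
        · exact h
      have hPsim : Measurable fun α => PsiE (α, y) :=
        hPsiE.comp (measurable_id.prodMk measurable_const)
      have haeα : ∀ᵐ α ∂(ν x), PsiE (α, y) = 0 := by
        have h1 := (lintegral_eq_zero_iff hPsim).mp hhE0
        filter_upwards [h1] with α hα
        simpa using hα
      have hdir : ∀ α, PsiE (α, y) = 0 → ν y = Measure.dirac α := by
        intro α h0
        haveI := hprob y
        have hWm : Measurable fun ξ => ENNReal.ofReal (H ξ - H α - deriv H α * (ξ - α)) :=
          ENNReal.measurable_ofReal.comp ((hHcont.measurable.sub measurable_const).sub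
            (measurable_const.mul (measurable_id.sub measurable_const)))
        have haeξ : ∀ᵐ ξ ∂(ν y), ξ = α := by
          have h1 := (lintegral_eq_zero_iff hWm).mp h0
          filter_upwards [h1] with ξ hξ
          by_contra hne
          have hpos := VDID.breg_pos hHdiff hHconv hne
          rw [Pi.zero_apply, ENNReal.ofReal_eq_zero] at hξ
          linarith
        have hcompl : ν y {α}ᶜ = 0 := ae_iff.mp haeξ
        exact VDID.eq_dirac_of_singleton (ν y)
          ((prob_compl_eq_zero_iff (measurableSet_singleton α)).mp hcompl)
      haveI := hprob x
      have hfull : ν x {α | ν y ≠ Measure.dirac α} = 0 := by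
        refine measure_mono_null ?_ (ae_iff.mp haeα)
        intro α hα h0
        exact hα (hdir α h0)
      obtain ⟨t, ht⟩ : ∃ t, ν y = Measure.dirac t := by
        by_contra hno
        push_neg at hno
        have huniv : {α | ν y ≠ Measure.dirac α} = univ := eq_univ_of_forall fun α => hno α
        rw [huniv, measure_univ] at hfull
        exact one_ne_zero hfull
      refine ⟨t, ht, ?_⟩
      have hsub : ({t}ᶜ : Set ℝ) ⊆ {α | ν y ≠ Measure.dirac α} := by
        intro α hα h'
        exact hα (mem_singleton_iff.mpr (VDID.dirac_inj (ht.symm.trans h')).symm)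
      have hxt : ν x {t}ᶜ = 0 := measure_mono_null hsub hfull
      exact VDID.eq_dirac_of_singleton (ν x)
        ((prob_compl_eq_zero_iff (measurableSet_singleton t)).mp hxt)
    have hax' : ∀ᵐ x ∂(volume.restrict (Ioi (0:ℝ))), x < y →
        ∃ t, ν y = Measure.dirac t ∧ ν x = Measure.dirac t := by
      filter_upwards [hax, ae_restrict_mem measurableSet_Ioi] with x h0 hxm hxy
      exact hkey x hxm hxy h0
    have hfreq : ∃ᶠ x in ae (volume.restrict (Ioi (0:ℝ))), x ∈ Ioo 0 y := by
      rw [frequently_ae_mem_iff, Measure.restrict_apply' measurableSet_Ioi,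
        inter_eq_left.mpr Ioo_subset_Ioi_self, Real.volume_Ioo, sub_zero]
      exact (ENNReal.ofReal_pos.mpr (mem_Ioi.mp hy)).ne'
    obtain ⟨x₀, hx₀⟩ := (hfreq.and_eventually hax').exists
    obtain ⟨t, hty, -⟩ := hx₀.2 hx₀.1.2
    refine ⟨t, hty, ?_⟩
    filter_upwards [hax'] with x hximp hxy
    obtain ⟨t', ht'y, ht'x⟩ := hximp hxy
    rwa [← VDID.dirac_inj (hty.symm.trans ht'y)] at ht'x
  have hgood : ∀ᵐ y ∂(volume.restrict (Ioi (0:ℝ))), ∃ t, ν y = Measure.dirac t ∧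
      ∀ᵐ x ∂(volume.restrict (Ioi (0:ℝ))), x < y → ν x = Measure.dirac t := by
    have hae1 := (lintegral_eq_zero_iff hG).mp hGzero
    filter_upwards [hae1, ae_restrict_mem measurableSet_Ioi] with y h0 hy
    refine hstep y hy ?_
    simpa using h0
  have hyn : ∀ n : ℕ, ∃ y : ℝ, (n:ℝ) < y ∧ ∃ t, ν y = Measure.dirac t ∧
      ∀ᵐ x ∂(volume.restrict (Ioi (0:ℝ))), x < y → ν x = Measure.dirac t := by
    intro n
    have hfr : ∃ᶠ y in ae (volume.restrict (Ioi (0:ℝ))), y ∈ Ioi (n:ℝ) := by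
      rw [frequently_ae_mem_iff, Measure.restrict_apply' measurableSet_Ioi,
        inter_eq_left.mpr (Ioi_subset_Ioi (Nat.cast_nonneg n)), Real.volume_Ioi]
      simp
    obtain ⟨y, hy1, hy2⟩ := (hfr.and_eventually hgood).exists
    exact ⟨y, hy1, hy2⟩
  choose yseq hygt hrest using hyn
  choose tseq hts haes using hrest
  have hypos : ∀ n, (0:ℝ) < yseq n := fun n =>
    lt_of_le_of_lt (Nat.cast_nonneg n) (hygt n)
  have hcons : ∀ n, tseq n = tseq 0 := by
    intro n
    have hpos : (0:ℝ) < min (yseq n) (yseq 0) := lt_min (hypos n) (hypos 0)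
    have hfr : ∃ᶠ x in ae (volume.restrict (Ioi (0:ℝ))),
        x ∈ Ioo 0 (min (yseq n) (yseq 0)) := by
      rw [frequently_ae_mem_iff, Measure.restrict_apply' measurableSet_Ioi,
        inter_eq_left.mpr Ioo_subset_Ioi_self, Real.volume_Ioo, sub_zero]
      exact (ENNReal.ofReal_pos.mpr hpos).ne'
    obtain ⟨x, hxm, hx1, hx2⟩ := (hfr.and_eventually ((haes n).and (haes 0))).exists
    have e1 := hx1 (lt_of_lt_of_le hxm.2 (min_le_left _ _))
    have e2 := hx2 (lt_of_lt_of_le hxm.2 (min_le_right _ _))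
    exact VDID.dirac_inj (e1.symm.trans e2)
  refine ⟨hmbar0, tseq 0, ?_⟩
  have hall : ∀ᵐ x ∂(volume.restrict (Ioi (0:ℝ))), ∀ n : ℕ, x < yseq n →
      ν x = Measure.dirac (tseq 0) := by
    rw [ae_all_iff]
    intro n
    have h := haes n
    rw [hcons n] at h
    exact h
  filter_upwards [hall] with x hx
  obtain ⟨n, hn⟩ := exists_nat_gt x
  exact hx n (hn.trans (hygt n))
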